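/- Let s > d + r with r ≥ 0 an integer, and let N_k(u) = ∑_{k₁+⋯+k_l=k} v_{k₁}⋯v_{k_l} be the k-th Fourier coefficient of a monomial N(u, Du, …, D^r u) of degree l, where each v_{k_j} is a Fourier coefficient of u or of a partial derivative of u of order at most r. If |u_k| ≤ C/|k|^s for k ≠ 0 and |u_0| ≤ C, then the series defining N_k(u) converges absolutely and there is a constant D = D(C,s,l,d,r) with |N_k(u)| ≤ D/|k|^{s-r} for k ≠ 0 and |N_0(u)| ≤ D. -/

import Mathlib

open scoped BigOperators ENNReal NNReal

noncomputable def znorm {d : ℕ} (k : Fin d → ℤ) : ℝ := ‖(fun i => (k i : ℝ) : Fin d → ℝ)‖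

/-- The modified norm on `ℤ^d`: the norm of `k` for `k ≠ 0`, and `|0| := 1`. -/
noncomputable def mnorm {d : ℕ} (k : Fin d → ℤ) : ℝ := if k = 0 then 1 else znorm k

lemma one_le_mnorm {d : ℕ} (k : Fin d → ℤ) : 1 ≤ mnorm k := by
  unfold mnorm
  split_ifs with h
  · exact le_refl 1
  · obtain ⟨i, hi⟩ := Function.ne_iff.mp h
    have h1 : (1 : ℝ) ≤ |(k i : ℝ)| := by
      have : 1 ≤ |k i| := Int.one_le_abs (by simpa using hi)
      calc (1:ℝ) = ((1:ℤ):ℝ) := by norm_num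
        _ ≤ ((|k i| : ℤ) : ℝ) := by exact_mod_cast this
        _ = |(k i : ℝ)| := by push_cast; ring
    calc (1:ℝ) ≤ |(k i : ℝ)| := h1
      _ ≤ znorm k := by
          simpa [Real.norm_eq_abs, znorm] using norm_le_pi_norm (fun i => (k i : ℝ)) i

lemma mnorm_pos {d : ℕ} (k : Fin d → ℤ) : 0 < mnorm k :=
  lt_of_lt_of_le one_pos (one_le_mnorm k)

lemma abs_coord_le_mnorm {d : ℕ} (k : Fin d → ℤ) (i : Fin d) :
    |(k i : ℝ)| ≤ mnorm k := by
  unfold mnorm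
  split_ifs with h
  · subst h; simp
  · simpa [Real.norm_eq_abs, znorm] using norm_le_pi_norm (fun i => (k i : ℝ)) i

lemma mnorm_le_sum {d l : ℕ} (hl : 1 ≤ l) (v : Fin l → (Fin d → ℤ)) (k : Fin d → ℤ)
    (hv : ∑ j, v j = k) : ∃ j₀ : Fin l, mnorm k ≤ (l : ℝ) * mnorm (v j₀) := by
  haveI : Nonempty (Fin l) := ⟨⟨0, hl⟩⟩
  obtain ⟨j₀, -, hj₀⟩ := Finset.exists_max_image Finset.univ (fun j => mnorm (v j))
    ⟨Classical.arbitrary _, Finset.mem_univ _⟩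
  refine ⟨j₀, ?_⟩
  have h1 : (1:ℝ) ≤ mnorm (v j₀) := one_le_mnorm _
  have hl1 : (1:ℝ) ≤ (l:ℝ) := by exact_mod_cast hl
  have hbig : znorm k ≤ (l:ℝ) * mnorm (v j₀) := by
    have hk : (fun i => (k i : ℝ)) = ∑ j, (fun i => (v j i : ℝ)) := by
      funext i
      rw [← hv]
      push_cast [Finset.sum_apply]
      simp
    calc znorm k = ‖∑ j, (fun i => (v j i : ℝ))‖ := by rw [znorm, hk]
      _ ≤ ∑ j, ‖(fun i => (v j i : ℝ))‖ := norm_sum_le _ _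
      _ ≤ ∑ j : Fin l, mnorm (v j) := by
          refine Finset.sum_le_sum fun j _ => ?_
          have := abs_coord_le_mnorm (v j)
          unfold mnorm znorm
          split_ifs with h
          · have : (fun i => ((v j) i : ℝ)) = (0 : Fin d → ℝ) := by
              funext i; simp [h, show v j = 0 from h]
            rw [this]; simp
          · exact le_refl _
      _ ≤ ∑ j : Fin l, mnorm (v j₀) :=
          Finset.sum_le_sum fun j _ => hj₀ j (Finset.mem_univ j)
      _ = (l:ℝ) * mnorm (v j₀) := by simp [Finset.sum_const, mul_comm]
  by_cases h : k = 0
  · have : mnorm k = 1 := if_pos h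
    rw [this]; nlinarith
  · have : mnorm k = znorm k := if_neg h
    rw [this]; exact hbig
lemma tsum_pi_prod_fin {α : Type*} (g : α → ℝ≥0∞) :
    ∀ n, ∑' w : Fin n → α, ∏ j, g (w j) = (∑' x, g x) ^ n := by
  intro n
  induction n with
  | zero =>
    haveI : Unique (Fin 0 → α) := ⟨⟨fun i => i.elim0⟩, fun w => funext fun i => i.elim0⟩
    rw [tsum_eq_single (default : Fin 0 → α) (fun b hb => absurd (Unique.eq_default b) hb)]
    simp
  | succ n ih =>
    rw [← (Fin.consEquiv (fun _ => α)).tsum_eq (fun w => ∏ j, g (w j))]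
    rw [ENNReal.tsum_prod']
    have : ∀ (x : α) (w : Fin n → α),
        (∏ j, g ((Fin.consEquiv (fun _ => α)) (x, w) j)) = g x * ∏ j, g (w j) := by
      intro x w
      simp [Fin.consEquiv, Fin.prod_univ_succ]
    simp_rw [this, ENNReal.tsum_mul_left, ENNReal.tsum_mul_right, ih, pow_succ]
    ring

lemma tsum_pi_prod {ι α : Type*} [Fintype ι] (g : α → ℝ≥0∞) :
    ∑' w : ι → α, ∏ j, g (w j) = (∑' x, g x) ^ (Fintype.card ι) := by
  classical
  set n := Fintype.card ι
  let e := Fintype.equivFin ι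
  let E : (Fin n → α) ≃ (ι → α) := Equiv.arrowCongr e.symm (Equiv.refl α)
  rw [← E.tsum_eq (fun w => ∏ j, g (w j))]
  have h : ∀ w' : Fin n → α, (∏ j, g (E w' j)) = ∏ j' : Fin n, g (w' j') := by
    intro w'
    have h2 : ∀ j : ι, E w' j = w' (e j) := by
      intro j; simp [E, Equiv.arrowCongr]
    calc (∏ j : ι, g (E w' j)) = ∏ j : ι, g (w' (e j)) := by simp_rw [h2]
      _ = _ := Equiv.prod_comp e fun j' => g (w' j')
  simp_rw [h]
  exact tsum_pi_prod_fin g n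

lemma summable_g1 {b : ℝ} (hb : 1 < b) :
    Summable (fun n : ℤ => ((max 1 |(n:ℝ)|) ^ b)⁻¹) := by
  have h0 := Real.summable_abs_int_rpow hb
  have hind : Summable (fun n : ℤ => if n = 0 then (1:ℝ) else 0) := by
    apply summable_of_ne_finset_zero (s := {0})
    intro n hn
    simp only [Finset.mem_singleton] at hn
    simp [hn]
  refine (h0.add hind).congr fun n => ?_
  by_cases hn : n = 0
  · subst hn
    rw [if_pos rfl]
    norm_num [Real.zero_rpow (show -b ≠ 0 by linarith), Real.one_rpow]
  · have h1 : (1:ℝ) ≤ |(n:ℝ)| := by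
      have : 1 ≤ |n| := Int.one_le_abs hn
      calc (1:ℝ) = ((1:ℤ):ℝ) := by norm_num
        _ ≤ ((|n| : ℤ) : ℝ) := by exact_mod_cast this
        _ = |(n : ℝ)| := by push_cast; ring
    have habs : (0:ℝ) < |(n:ℝ)| := by linarith
    rw [if_neg hn, add_zero, max_eq_right h1, Real.rpow_neg (abs_nonneg _)]

lemma S_ne_top {d : ℕ} (hd : 1 ≤ d) {t : ℝ} (ht : (d:ℝ) < t) :
    (∑' m : Fin d → ℤ, ENNReal.ofReal ((mnorm m ^ t)⁻¹)) ≠ ⊤ := by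
  have hd0 : (0:ℝ) < d := by exact_mod_cast hd
  have ht0 : 0 < t := lt_trans hd0 ht
  have htd : 1 < t / d := (one_lt_div hd0).mpr ht
  have htd0 : 0 ≤ t / d := by positivity
  set g1 : ℤ → ℝ := fun n => ((max 1 |(n:ℝ)|) ^ (t/d))⁻¹ with hg1
  have hg1nn : ∀ n, 0 ≤ g1 n := by
    intro n
    have : (0:ℝ) < max 1 |(n:ℝ)| := lt_of_lt_of_le one_pos (le_max_left _ _)
    positivity
  have hsum : Summable g1 := summable_g1 htd
  have hpt : ∀ m : Fin d → ℤ,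
      ENNReal.ofReal ((mnorm m ^ t)⁻¹) ≤ ∏ i, ENNReal.ofReal (g1 (m i)) := by
    intro m
    rw [← ENNReal.ofReal_prod_of_nonneg (fun i _ => hg1nn (m i))]
    apply ENNReal.ofReal_le_ofReal
    have hmax : ∀ i : Fin d, (0:ℝ) < max 1 |(m i : ℝ)| :=
      fun i => lt_of_lt_of_le one_pos (le_max_left _ _)
    have h1 : (∏ i, g1 (m i)) = ((∏ i, max 1 |(m i:ℝ)|) ^ (t/d))⁻¹ := by
      simp only [hg1]
      rw [Finset.prod_inv_distrib]
      congr 1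
      exact Real.finset_prod_rpow _ _ (fun i _ => le_of_lt (hmax i)) _
    rw [h1]
    have h2 : (∏ i, max 1 |(m i : ℝ)|) ≤ mnorm m ^ (d:ℕ) := by
      calc (∏ i, max 1 |(m i : ℝ)|) ≤ ∏ _i : Fin d, mnorm m := by
            refine Finset.prod_le_prod (fun i _ => le_of_lt (hmax i)) (fun i _ => ?_)
            exact max_le (one_le_mnorm m) (abs_coord_le_mnorm m i)
        _ = mnorm m ^ (d:ℕ) := by simp [Finset.prod_const]
    have hprodpos : (0:ℝ) < ∏ i, max 1 |(m i : ℝ)| := Finset.prod_pos (fun i _ => hmax i)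
    have h3 : (∏ i, max 1 |(m i : ℝ)|) ^ (t/d) ≤ mnorm m ^ t := by
      calc (∏ i, max 1 |(m i : ℝ)|) ^ (t/d) ≤ (mnorm m ^ (d:ℕ)) ^ (t/d) :=
            Real.rpow_le_rpow hprodpos.le h2 htd0
        _ = mnorm m ^ t := by
            rw [← Real.rpow_natCast (mnorm m) d, ← Real.rpow_mul (mnorm_pos m).le]
            congr 1
            field_simp
    exact inv_anti₀ (Real.rpow_pos_of_pos hprodpos _) h3
  have step : (∑' m : Fin d → ℤ, ENNReal.ofReal ((mnorm m ^ t)⁻¹))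
      ≤ (∑' n : ℤ, ENNReal.ofReal (g1 n)) ^ d := by
    calc (∑' m : Fin d → ℤ, ENNReal.ofReal ((mnorm m ^ t)⁻¹))
        ≤ ∑' m : Fin d → ℤ, ∏ i, ENNReal.ofReal (g1 (m i)) := ENNReal.tsum_le_tsum hpt
      _ = (∑' n : ℤ, ENNReal.ofReal (g1 n)) ^ d := by rw [tsum_pi_prod (fun n : ℤ => ENNReal.ofReal (g1 n))]; simp
  have hfin : (∑' n : ℤ, ENNReal.ofReal (g1 n)) ≠ ⊤ := by
    rw [← ENNReal.ofReal_tsum_of_nonneg hg1nn hsum]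
    exact ENNReal.ofReal_ne_top
  exact ne_top_of_le_ne_top (ENNReal.pow_ne_top hfin) step

lemma fiber_bound {d l : ℕ} {t : ℝ} (k : Fin d → ℤ) (j₀ : Fin l) :
    (∑' v : {v : Fin l → (Fin d → ℤ) // ∑ j, v j = k},
      ∏ j ∈ Finset.univ.erase j₀, ENNReal.ofReal ((mnorm (v.1 j) ^ t)⁻¹))
    ≤ (∑' m : Fin d → ℤ, ENNReal.ofReal ((mnorm m ^ t)⁻¹)) ^ (l - 1) := by
  classical
  set ρ : {v : Fin l → (Fin d → ℤ) // ∑ j, v j = k} → ({j : Fin l // j ≠ j₀} → (Fin d → ℤ)) :=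
    fun v => fun j => v.1 j.1 with hρ
  have hinj : Function.Injective ρ := by
    intro v w h
    have hcoord : ∀ j : Fin l, j ≠ j₀ → v.1 j = w.1 j := by
      intro j hj; exact congrFun h ⟨j, hj⟩
    apply Subtype.ext; funext j
    by_cases hj : j = j₀
    · subst hj
      have e1 : v.1 j + ∑ x ∈ Finset.univ.erase j, v.1 x = k := by
        rw [Finset.add_sum_erase _ _ (Finset.mem_univ j)]; exact v.2
      have e2 : w.1 j + ∑ x ∈ Finset.univ.erase j, w.1 x = k := by
        rw [Finset.add_sum_erase _ _ (Finset.mem_univ j)]; exact w.2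
      have e3 : ∑ x ∈ Finset.univ.erase j, v.1 x = ∑ x ∈ Finset.univ.erase j, w.1 x :=
        Finset.sum_congr rfl (fun x hx => hcoord x (Finset.mem_erase.mp hx).1)
      have e4 := e1.trans e2.symm
      rw [e3] at e4
      exact add_right_cancel e4
    · exact hcoord j hj
  have hfac : ∀ v, (∏ j ∈ Finset.univ.erase j₀, ENNReal.ofReal ((mnorm (v.1 j) ^ t)⁻¹))
      = ∏ j : {j : Fin l // j ≠ j₀}, ENNReal.ofReal ((mnorm (ρ v j) ^ t)⁻¹) := by
    intro v
    exact Finset.prod_subtype _ (by intro x; simp [Finset.mem_erase]) _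
  have hcard : Fintype.card {j : Fin l // j ≠ j₀} = l - 1 := by
    simp [Ne, Fintype.card_subtype_compl, Fintype.card_subtype_eq, Fintype.card_fin]
  calc (∑' v : {v : Fin l → (Fin d → ℤ) // ∑ j, v j = k},
      ∏ j ∈ Finset.univ.erase j₀, ENNReal.ofReal ((mnorm (v.1 j) ^ t)⁻¹))
      = ∑' v : {v : Fin l → (Fin d → ℤ) // ∑ j, v j = k},
        (fun w : {j : Fin l // j ≠ j₀} → (Fin d → ℤ) =>
          ∏ j, ENNReal.ofReal ((mnorm (w j) ^ t)⁻¹)) (ρ v) := by simp_rw [hfac]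
    _ ≤ ∑' w : {j : Fin l // j ≠ j₀} → (Fin d → ℤ),
          ∏ j, ENNReal.ofReal ((mnorm (w j) ^ t)⁻¹) :=
        ENNReal.tsum_comp_le_tsum_of_injective hinj _
    _ = _ := by
        rw [tsum_pi_prod (fun m : Fin d → ℤ => ENNReal.ofReal ((mnorm m ^ t)⁻¹)), hcard]

lemma conv_bound {d l : ℕ} (hl : 1 ≤ l) {t : ℝ} (ht : 0 ≤ t) (k : Fin d → ℤ) :
    ∑' v : {v : Fin l → (Fin d → ℤ) // ∑ j, v j = k},
        ∏ j, ENNReal.ofReal ((mnorm (v.1 j) ^ t)⁻¹)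
      ≤ ENNReal.ofReal ((l:ℝ) ^ t) * l
        * (∑' m : Fin d → ℤ, ENNReal.ofReal ((mnorm m ^ t)⁻¹)) ^ (l - 1)
        * ENNReal.ofReal ((mnorm k ^ t)⁻¹) := by
  classical
  set S := ∑' m : Fin d → ℤ, ENNReal.ofReal ((mnorm m ^ t)⁻¹) with hS
  set K := ENNReal.ofReal ((l:ℝ) ^ t * (mnorm k ^ t)⁻¹) with hK
  have hlpos : (0:ℝ) < (l:ℝ) := by exact_mod_cast hl
  have hpt : ∀ v : {v : Fin l → (Fin d → ℤ) // ∑ j, v j = k},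
      (∏ j, ENNReal.ofReal ((mnorm (v.1 j) ^ t)⁻¹))
      ≤ K * ∑ j₀ : Fin l, ∏ j ∈ Finset.univ.erase j₀,
          ENNReal.ofReal ((mnorm (v.1 j) ^ t)⁻¹) := by
    intro v
    obtain ⟨j₀, hj₀⟩ := mnorm_le_sum hl v.1 k v.2
    have hM := mnorm_pos (v.1 j₀)
    have hKpos := mnorm_pos k
    have h1 : (mnorm (v.1 j₀) ^ t)⁻¹ ≤ (l:ℝ)^t * (mnorm k ^ t)⁻¹ := by
      have hKt : mnorm k ^ t ≤ (l:ℝ)^t * mnorm (v.1 j₀) ^ t := by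
        rw [← Real.mul_rpow hlpos.le hM.le]
        exact Real.rpow_le_rpow hKpos.le hj₀ ht
      have hA : (0:ℝ) < mnorm (v.1 j₀) ^ t := Real.rpow_pos_of_pos hM t
      have hB : (0:ℝ) < mnorm k ^ t := Real.rpow_pos_of_pos hKpos t
      have hL : (0:ℝ) < (l:ℝ) ^ t := Real.rpow_pos_of_pos hlpos t
      have h3 : mnorm k ^ t / (l:ℝ)^t ≤ mnorm (v.1 j₀) ^ t := by
        rw [div_le_iff₀ hL]; linarith [hKt]
      have h4 := inv_anti₀ (div_pos hB hL) h3
      calc (mnorm (v.1 j₀) ^ t)⁻¹ ≤ (mnorm k ^ t / (l:ℝ)^t)⁻¹ := h4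
        _ = (l:ℝ)^t * (mnorm k ^ t)⁻¹ := by
            rw [inv_div, div_eq_mul_inv]
    calc (∏ j, ENNReal.ofReal ((mnorm (v.1 j) ^ t)⁻¹))
        = ENNReal.ofReal ((mnorm (v.1 j₀) ^ t)⁻¹)
          * ∏ j ∈ Finset.univ.erase j₀, ENNReal.ofReal ((mnorm (v.1 j) ^ t)⁻¹) :=
          (Finset.mul_prod_erase Finset.univ _ (Finset.mem_univ j₀)).symm
      _ ≤ K * ∏ j ∈ Finset.univ.erase j₀, ENNReal.ofReal ((mnorm (v.1 j) ^ t)⁻¹) :=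
          mul_le_mul_left (ENNReal.ofReal_le_ofReal h1) _
      _ ≤ K * ∑ j₀' : Fin l, ∏ j ∈ Finset.univ.erase j₀',
            ENNReal.ofReal ((mnorm (v.1 j) ^ t)⁻¹) := by
          apply mul_le_mul_right
          exact Finset.single_le_sum (f := fun j₀' => ∏ j ∈ Finset.univ.erase j₀',
            ENNReal.ofReal ((mnorm (v.1 j) ^ t)⁻¹)) (fun _ _ => zero_le) (Finset.mem_univ j₀)
  calc (∑' v : {v : Fin l → (Fin d → ℤ) // ∑ j, v j = k},
        ∏ j, ENNReal.ofReal ((mnorm (v.1 j) ^ t)⁻¹))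
      ≤ ∑' v : {v : Fin l → (Fin d → ℤ) // ∑ j, v j = k},
        K * ∑ j₀ : Fin l, ∏ j ∈ Finset.univ.erase j₀,
          ENNReal.ofReal ((mnorm (v.1 j) ^ t)⁻¹) := ENNReal.tsum_le_tsum hpt
    _ = K * ∑ j₀ : Fin l, ∑' v : {v : Fin l → (Fin d → ℤ) // ∑ j, v j = k},
          ∏ j ∈ Finset.univ.erase j₀, ENNReal.ofReal ((mnorm (v.1 j) ^ t)⁻¹) := by
        rw [ENNReal.tsum_mul_left]
        congr 1
        exact Summable.tsum_finsetSum (fun _ _ => ENNReal.summable)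
    _ ≤ K * ∑ _j₀ : Fin l, S ^ (l - 1) := by
        apply mul_le_mul_right
        exact Finset.sum_le_sum (fun j₀ _ => fiber_bound k j₀)
    _ = ENNReal.ofReal ((l:ℝ) ^ t) * l * S ^ (l - 1) * ENNReal.ofReal ((mnorm k ^ t)⁻¹) := by
        rw [Finset.sum_const, Finset.card_univ, Fintype.card_fin, nsmul_eq_mul, hK,
          ENNReal.ofReal_mul (Real.rpow_nonneg hlpos.le t)]
        ring

/-- Decay of Fourier coefficients of a monomial nonlinearity `N(u,Du,…,D^r u)` of degree `l`:
`N_k(u) = a ∑_{k₁+⋯+k_l=k} v_{k₁}⋯v_{k_l}` where the `j`-th factor is the Fourier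
coefficient `i^{|β_j|} k_j^{β_j} u_{k_j}` of a derivative `D^{β_j} u` of order `|β_j| ≤ r`.
If `|u_k| ≤ C/|k|^s` (convention `|0| = 1`) with `s > d + r`, the series converges
absolutely and `|N_k(u)| ≤ D/|k|^{s-r}` for a constant `D = D(C,s,l,d,r,a)`. -/
theorem stmt10 {d r l : ℕ} (hd : 1 ≤ d) (hl : 1 ≤ l) (C s : ℝ) (hC : 0 < C)
    (hs : (d : ℝ) + r < s) (a : ℂ) :
    ∃ D : ℝ, 0 < D ∧ ∀ (u : (Fin d → ℤ) → ℂ),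
      (∀ k : Fin d → ℤ, ‖(u k)‖ ≤ C / mnorm k ^ s) →
      ∀ (β : Fin l → Fin d → ℕ), (∀ j, (∑ i, β j i) ≤ r) →
      ∀ k : Fin d → ℤ,
        Summable (fun v : {v : Fin l → (Fin d → ℤ) // ∑ j, v j = k} =>
          ‖(a * ∏ j, (Complex.I ^ (∑ i, β j i) *
            (∏ i, ((v.1 j i : ℂ)) ^ β j i) * u (v.1 j)))‖) ∧
        ‖(∑' v : {v : Fin l → (Fin d → ℤ) // ∑ j, v j = k},
          a * ∏ j, (Complex.I ^ (∑ i, β j i) *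
            (∏ i, ((v.1 j i : ℂ)) ^ β j i) * u (v.1 j)))‖ ≤ D / mnorm k ^ (s - r) := by
  have hd1 : (1:ℝ) ≤ (d:ℝ) := by exact_mod_cast hd
  set t : ℝ := s - (r:ℝ) with htdef
  have htd : (d:ℝ) < t := by rw [htdef]; linarith
  have htnn : (0:ℝ) ≤ t := by linarith
  set S := ∑' m : Fin d → ℤ, ENNReal.ofReal ((mnorm m ^ t)⁻¹) with hSdef
  have hSne : S ≠ ⊤ := S_ne_top hd htd
  set A : ℝ := ‖a‖ * C ^ l with hA
  have hAnn : 0 ≤ A := mul_nonneg (norm_nonneg _) (pow_nonneg hC.le l)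
  have hlpos : (0:ℝ) < (l:ℝ) := by exact_mod_cast hl
  set D0 : ℝ := A * ((l:ℝ)^t * (l:ℝ) * S.toReal ^ (l-1)) with hD0
  have hD0nn : 0 ≤ D0 := by
    apply mul_nonneg hAnn
    have := Real.rpow_nonneg hlpos.le t
    positivity
  refine ⟨D0 + 1, by linarith, ?_⟩
  intro u hu β hβ k
  set T : {v : Fin l → (Fin d → ℤ) // ∑ j, v j = k} → ℂ :=
    fun v => a * ∏ j, (Complex.I ^ (∑ i, β j i) *
      (∏ i, ((v.1 j i : ℂ)) ^ β j i) * u (v.1 j)) with hT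
  -- factor bound
  have hfac : ∀ (m : Fin d → ℤ) (j : Fin l),
      ‖(Complex.I ^ (∑ i, β j i) * (∏ i, ((m i : ℂ)) ^ β j i) * u m)‖
        ≤ C * (mnorm m ^ t)⁻¹ := by
    intro m j
    have hm1 := one_le_mnorm m
    have hmpos := mnorm_pos m
    have e1 : ‖(Complex.I ^ (∑ i, β j i) * (∏ i, ((m i : ℂ)) ^ β j i) * u m)‖
        = (∏ i, |(m i : ℝ)| ^ β j i) * ‖(u m)‖ := by
      rw [norm_mul, norm_mul, norm_pow, Complex.norm_I, one_pow, one_mul, norm_prod]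
      congr 1
      refine Finset.prod_congr rfl fun i _ => ?_
      rw [norm_pow, Complex.norm_intCast]
    rw [e1]
    have e2 : (∏ i, |(m i : ℝ)| ^ β j i) ≤ mnorm m ^ (r:ℕ) := by
      calc (∏ i, |(m i:ℝ)| ^ β j i) ≤ ∏ i, mnorm m ^ β j i :=
            Finset.prod_le_prod (fun i _ => pow_nonneg (abs_nonneg _) _)
              (fun i _ => pow_le_pow_left₀ (abs_nonneg _) (abs_coord_le_mnorm m i) _)
        _ = mnorm m ^ (∑ i, β j i) := by rw [Finset.prod_pow_eq_pow_sum]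
        _ ≤ mnorm m ^ (r:ℕ) := pow_le_pow_right₀ hm1 (hβ j)
    calc (∏ i, |(m i:ℝ)| ^ β j i) * ‖(u m)‖
        ≤ mnorm m ^ (r:ℕ) * (C / mnorm m ^ s) :=
          mul_le_mul e2 (hu m) (norm_nonneg _)
            (pow_nonneg hmpos.le _)
      _ = C * (mnorm m ^ t)⁻¹ := by
          have hts : mnorm m ^ t = mnorm m ^ s / mnorm m ^ ((r:ℕ):ℝ) := by
            rw [htdef, Real.rpow_sub hmpos]
          rw [hts, ← Real.rpow_natCast (mnorm m) r]
          have h1 : mnorm m ^ ((r:ℕ):ℝ) ≠ 0 := ne_of_gt (Real.rpow_pos_of_pos hmpos _)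
          have h2 : mnorm m ^ s ≠ 0 := ne_of_gt (Real.rpow_pos_of_pos hmpos _)
          field_simp
  -- product bound, in ℝ≥0∞
  have hTb : ∀ v : {v : Fin l → (Fin d → ℤ) // ∑ j, v j = k},
      ENNReal.ofReal (‖(T v)‖) ≤
      ENNReal.ofReal A * ∏ j, ENNReal.ofReal ((mnorm (v.1 j) ^ t)⁻¹) := by
    intro v
    have h1 : ‖(T v)‖ ≤ A * ∏ j, (mnorm (v.1 j) ^ t)⁻¹ := by
      rw [hT]
      rw [norm_mul, norm_prod]
      calc ‖a‖ * ∏ j, ‖(Complex.I ^ (∑ i, β j i) *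
              (∏ i, ((v.1 j i : ℂ)) ^ β j i) * u (v.1 j))‖
          ≤ ‖a‖ * ∏ j, (C * (mnorm (v.1 j) ^ t)⁻¹) := by
            apply mul_le_mul_of_nonneg_left _ (norm_nonneg _)
            refine Finset.prod_le_prod (fun j _ => norm_nonneg _)
              (fun j _ => hfac (v.1 j) j)
        _ = A * ∏ j, (mnorm (v.1 j) ^ t)⁻¹ := by
            rw [Finset.prod_mul_distrib, Finset.prod_const, Finset.card_univ,
              Fintype.card_fin, hA]
            ring
    calc ENNReal.ofReal (‖(T v)‖)
        ≤ ENNReal.ofReal (A * ∏ j, (mnorm (v.1 j) ^ t)⁻¹) := ENNReal.ofReal_le_ofReal h1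
      _ = ENNReal.ofReal A * ∏ j, ENNReal.ofReal ((mnorm (v.1 j) ^ t)⁻¹) := by
          rw [ENNReal.ofReal_mul hAnn, ENNReal.ofReal_prod_of_nonneg
            (fun j _ => inv_nonneg.mpr (Real.rpow_nonneg (mnorm_pos _).le _))]
  have hKnn : (0:ℝ) ≤ (mnorm k ^ t)⁻¹ := inv_nonneg.mpr (Real.rpow_nonneg (mnorm_pos _).le _)
  have key : (∑' v : {v : Fin l → (Fin d → ℤ) // ∑ j, v j = k},
      ENNReal.ofReal (‖(T v)‖)) ≤ ENNReal.ofReal (D0 * (mnorm k ^ t)⁻¹) := by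
    calc (∑' v : {v : Fin l → (Fin d → ℤ) // ∑ j, v j = k},
        ENNReal.ofReal (‖(T v)‖))
        ≤ ∑' v : {v : Fin l → (Fin d → ℤ) // ∑ j, v j = k},
          ENNReal.ofReal A * ∏ j, ENNReal.ofReal ((mnorm (v.1 j) ^ t)⁻¹) :=
          ENNReal.tsum_le_tsum hTb
      _ = ENNReal.ofReal A * ∑' v : {v : Fin l → (Fin d → ℤ) // ∑ j, v j = k},
          ∏ j, ENNReal.ofReal ((mnorm (v.1 j) ^ t)⁻¹) := ENNReal.tsum_mul_left
      _ ≤ ENNReal.ofReal A * (ENNReal.ofReal ((l:ℝ) ^ t) * l * S ^ (l - 1)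
            * ENNReal.ofReal ((mnorm k ^ t)⁻¹)) :=
          mul_le_mul_right (conv_bound hl htnn k) _
      _ = ENNReal.ofReal (D0 * (mnorm k ^ t)⁻¹) := by
          rw [← ENNReal.ofReal_toReal hSne, ← ENNReal.ofReal_pow ENNReal.toReal_nonneg,
            ← ENNReal.ofReal_natCast l,
            ← ENNReal.ofReal_mul (Real.rpow_nonneg hlpos.le t),
            ← ENNReal.ofReal_mul (mul_nonneg (Real.rpow_nonneg hlpos.le t) hlpos.le),
            ← ENNReal.ofReal_mul (by positivity),
            ← ENNReal.ofReal_mul hAnn]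
          congr 1
          rw [hD0]
          ring
  have hsum : Summable (fun v : {v : Fin l → (Fin d → ℤ) // ∑ j, v j = k} =>
      ‖(T v)‖) := by
    have hne : (∑' v : {v : Fin l → (Fin d → ℤ) // ∑ j, v j = k},
        ENNReal.ofReal (‖(T v)‖)) ≠ ⊤ :=
      ne_top_of_le_ne_top ENNReal.ofReal_ne_top key
    have h2 : Summable (fun v : {v : Fin l → (Fin d → ℤ) // ∑ j, v j = k} =>
        Real.toNNReal (‖(T v)‖)) := ENNReal.tsum_coe_ne_top_iff_summable.mp hne
    exact (NNReal.summable_coe.mpr h2).congr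
      (fun v => Real.coe_toNNReal _ (norm_nonneg _))
  constructor
  · simpa [hT] using hsum
  · have hsn : Summable (fun v : {v : Fin l → (Fin d → ℤ) // ∑ j, v j = k} => ‖T v‖) := by
      simpa using hsum
    have h5 : ‖∑' v : {v : Fin l → (Fin d → ℤ) // ∑ j, v j = k}, T v‖
        ≤ ∑' v : {v : Fin l → (Fin d → ℤ) // ∑ j, v j = k}, ‖T v‖ :=
      norm_tsum_le_tsum_norm hsn
    have h6 : (∑' v : {v : Fin l → (Fin d → ℤ) // ∑ j, v j = k}, ‖T v‖)
        ≤ D0 * (mnorm k ^ t)⁻¹ := by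
      have h7 := ENNReal.toReal_mono ENNReal.ofReal_ne_top key
      rw [ENNReal.tsum_toReal_eq (fun v => ENNReal.ofReal_ne_top)] at h7
      have h8 : ∀ v : {v : Fin l → (Fin d → ℤ) // ∑ j, v j = k},
          (ENNReal.ofReal (‖(T v)‖)).toReal = ‖T v‖ := fun v => by
        rw [ENNReal.toReal_ofReal (norm_nonneg _)]
      simp_rw [h8] at h7
      rwa [ENNReal.toReal_ofReal (mul_nonneg hD0nn hKnn)] at h7
    have h9 : ‖(∑' v : {v : Fin l → (Fin d → ℤ) // ∑ j, v j = k}, T v)‖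
        ≤ (D0 + 1) / mnorm k ^ t := by
      rw [div_eq_mul_inv]
      calc ‖∑' v : {v : Fin l → (Fin d → ℤ) // ∑ j, v j = k}, T v‖
          ≤ D0 * (mnorm k ^ t)⁻¹ := le_trans h5 h6
        _ ≤ (D0 + 1) * (mnorm k ^ t)⁻¹ := by
            apply mul_le_mul_of_nonneg_right _ hKnn
            linarith
    simpa [hT] using h9
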